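/- arXiv:1303.7196 — 3 statements merged into one kernel-verified Lean document; each statement's English description precedes it below -/
import Mathlib

section
/- Let ν satisfy the equilibrium relation f(ν(T(x))) = -u(x) - c(x,T(x)) - ∫φ(T(x),T(z))dμ(z) - V(T(x)) where f satisfies the Inada conditions. If osc u ≤ osc c, ∫ν dm = 1 with m(Y) = M, and c, φ, V are bounded, then ν is bounded below by f⁻¹(f(1/M) - 2 osc c - 2 osc φ - osc V) > 0 and above by f⁻¹(f(1/M) + 2 osc c + 2 osc φ + osc V) < ∞. -/
open MeasureTheory

/-- upper and lower bounds on the equilibrium density `ν`.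
If `f(ν(T x)) = -u(x) - c(x,T x) - ∫ φ(T x, T z) dμ(z) - V(T x)` with `f`
satisfying the Inada conditions (strictly increasing bijection from `(0,∞)`
onto `ℝ`), `osc u ≤ osc c`, `∫ ν dm = 1`, `m(Y) = M`, and `c, φ, V` bounded,
then `ν` is bounded below by `f⁻¹(f(1/M) - 2 osc c - 2 osc φ - osc V) > 0`
and above by `f⁻¹(f(1/M) + 2 osc c + 2 osc φ + osc V) < ∞`. -/
theorem stmt4 {X Y : Type*} [MeasurableSpace X] [MeasurableSpace Y]
    [Nonempty X] [Nonempty Y]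
    (μ : Measure X) [IsProbabilityMeasure μ]
    (m : Measure Y) [IsFiniteMeasure m]
    (M : ℝ) (hM : M = (m Set.univ).toReal) (hMpos : 0 < M)
    (c : X → Y → ℝ) (φ : Y → Y → ℝ) (V : Y → ℝ) (u : X → ℝ) (ν : Y → ℝ)
    (T : X → Y) (hT : Function.Surjective T)
    (f : ℝ → ℝ)
    (hfmono : StrictMonoOn f (Set.Ioi 0))
    (hfbij : Set.BijOn f (Set.Ioi 0) Set.univ)
    (hνpos : ∀ y, 0 < ν y)
    (hνint : ∫ y, ν y ∂m = 1)
    (hφint : ∀ y, Integrable (fun z => φ y (T z)) μ)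
    (hcA : BddAbove (Set.range fun p : X × Y => c p.1 p.2))
    (hcB : BddBelow (Set.range fun p : X × Y => c p.1 p.2))
    (hφA : BddAbove (Set.range fun p : Y × Y => φ p.1 p.2))
    (hφB : BddBelow (Set.range fun p : Y × Y => φ p.1 p.2))
    (hVA : BddAbove (Set.range V)) (hVB : BddBelow (Set.range V))
    (huA : BddAbove (Set.range u)) (huB : BddBelow (Set.range u))
    (hoscu : (⨆ x, u x) - (⨅ x, u x) ≤
      (⨆ p : X × Y, c p.1 p.2) - (⨅ p : X × Y, c p.1 p.2))
    (hrel : ∀ x, f (ν (T x)) =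
      -u x - c x (T x) - (∫ z, φ (T x) (T z) ∂μ) - V (T x)) :
    ∃ νl νu : ℝ, 0 < νl ∧ νl ≤ νu ∧
      f νl = f (1 / M)
        - 2 * ((⨆ p : X × Y, c p.1 p.2) - (⨅ p : X × Y, c p.1 p.2))
        - 2 * ((⨆ p : Y × Y, φ p.1 p.2) - (⨅ p : Y × Y, φ p.1 p.2))
        - ((⨆ y, V y) - (⨅ y, V y)) ∧
      f νu = f (1 / M)
        + 2 * ((⨆ p : X × Y, c p.1 p.2) - (⨅ p : X × Y, c p.1 p.2))
        + 2 * ((⨆ p : Y × Y, φ p.1 p.2) - (⨅ p : Y × Y, φ p.1 p.2))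
        + ((⨆ y, V y) - (⨅ y, V y)) ∧
      ∀ y, νl ≤ ν y ∧ ν y ≤ νu := by
  have hoc : ∀ x (y : Y) x' y', c x y - c x' y' ≤
      (⨆ p : X × Y, c p.1 p.2) - (⨅ p : X × Y, c p.1 p.2) :=
    fun x y x' y' => sub_le_sub (le_ciSup hcA (x, y)) (ciInf_le hcB (x', y'))
  have hop : ∀ (y : Y) (z : Y) y' z', φ y z - φ y' z' ≤
      (⨆ p : Y × Y, φ p.1 p.2) - (⨅ p : Y × Y, φ p.1 p.2) :=
    fun y z y' z' => sub_le_sub (le_ciSup hφA (y, z)) (ciInf_le hφB (y', z'))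
  have hov : ∀ y y', V y - V y' ≤ (⨆ y, V y) - (⨅ y, V y) :=
    fun y y' => sub_le_sub (le_ciSup hVA y) (ciInf_le hVB y')
  have hou : ∀ x x', u x - u x' ≤ (⨆ x, u x) - (⨅ x, u x) :=
    fun x x' => sub_le_sub (le_ciSup huA x) (ciInf_le huB x')
  set oc := (⨆ p : X × Y, c p.1 p.2) - (⨅ p : X × Y, c p.1 p.2) with hocdef
  set op := (⨆ p : Y × Y, φ p.1 p.2) - (⨅ p : Y × Y, φ p.1 p.2) with hopdef
  set oV := (⨆ y, V y) - (⨅ y, V y) with hoVdef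
  obtain ⟨x₀⟩ := (inferInstance : Nonempty X)
  obtain ⟨y₀'⟩ := (inferInstance : Nonempty Y)
  have hocnn : 0 ≤ oc := by have := hoc x₀ y₀' x₀ y₀'; linarith
  have hopnn : 0 ≤ op := by have := hop y₀' y₀' y₀' y₀'; linarith
  have hoVnn : 0 ≤ oV := by have := hov y₀' y₀'; linarith
  set Δ := 2 * oc + 2 * op + oV with hΔdef
  have hΔnn : 0 ≤ Δ := by linarith
  -- oscillation bound on f ∘ ν ∘ T
  have key : ∀ x x' : X, f (ν (T x)) - f (ν (T x')) ≤ Δ := by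
    intro x x'
    rw [hrel x, hrel x']
    have hu : u x' - u x ≤ oc := le_trans (hou x' x) hoscu
    have hc : c x' (T x') - c x (T x) ≤ oc := hoc x' (T x') x (T x)
    have hV : V (T x') - V (T x) ≤ oV := hov (T x') (T x)
    have hφ : (∫ z, φ (T x') (T z) ∂μ) - (∫ z, φ (T x) (T z) ∂μ) ≤ op := by
      rw [← integral_sub (hφint _) (hφint _)]
      calc ∫ z, (φ (T x') (T z) - φ (T x) (T z)) ∂μ
          ≤ ∫ _z, op ∂μ := by
            apply integral_mono ((hφint _).sub (hφint _)) (integrable_const _)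
            intro z
            exact hop (T x') (T z) (T x) (T z)
        _ = op := by simp
    linarith
  -- key across all of Y using surjectivity
  have key' : ∀ y y' : Y, f (ν y) - f (ν y') ≤ Δ := by
    intro y y'
    obtain ⟨x, rfl⟩ := hT y
    obtain ⟨x', rfl⟩ := hT y'
    exact key x x'
  have hνintg : Integrable ν m := integrable_of_integral_eq_one hνint
  have hmne : m ≠ 0 := by
    intro h
    rw [h] at hM
    simp at hM
    linarith
  haveI : (ae m).NeBot := ae_neBot.mpr hmne
  have hIconst : ∫ _y, (1 / M) ∂m = 1 := by
    rw [integral_const, smul_eq_mul, measureReal_def, ← hM]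
    field_simp
  -- there is a point where ν ≤ 1/M
  have hylow : ∃ y, ν y ≤ 1 / M := by
    by_contra h
    push_neg at h
    have hnn : 0 ≤ fun y => ν y - 1 / M := fun y =>
      sub_nonneg.mpr (h y).le
    have hint0 : ∫ y, (ν y - 1 / M) ∂m = 0 := by
      rw [integral_sub hνintg (integrable_const _), hνint, hIconst]; ring
    have hae := (integral_eq_zero_iff_of_nonneg hnn
      (hνintg.sub (integrable_const _))).mp hint0
    obtain ⟨y, hy⟩ := hae.exists
    have := h y
    simp only [Pi.zero_apply] at hy
    linarith
  -- there is a point where ν ≥ 1/M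
  have hyhigh : ∃ y, 1 / M ≤ ν y := by
    by_contra h
    push_neg at h
    have hnn : 0 ≤ fun y => 1 / M - ν y := fun y =>
      sub_nonneg.mpr (h y).le
    have hint0 : ∫ y, (1 / M - ν y) ∂m = 0 := by
      rw [integral_sub (integrable_const _) hνintg, hνint, hIconst]; ring
    have hae := (integral_eq_zero_iff_of_nonneg hnn
      ((integrable_const _).sub hνintg)).mp hint0
    obtain ⟨y, hy⟩ := hae.exists
    have := h y
    simp only [Pi.zero_apply] at hy
    linarith
  obtain ⟨ylow, hylow⟩ := hylow
  obtain ⟨yhigh, hyhigh⟩ := hyhigh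
  have hMinv : (1 : ℝ) / M ∈ Set.Ioi (0 : ℝ) := by
    simp [Set.mem_Ioi]; positivity
  have hmon := hfmono.monotoneOn
  -- bounds on f (ν y)
  have hub : ∀ y, f (ν y) ≤ f (1 / M) + Δ := by
    intro y
    have h1 := key' y ylow
    have h2 : f (ν ylow) ≤ f (1 / M) :=
      hmon (Set.mem_Ioi.mpr (hνpos ylow)) hMinv hylow
    linarith
  have hlb : ∀ y, f (1 / M) - Δ ≤ f (ν y) := by
    intro y
    have h1 := key' yhigh y
    have h2 : f (1 / M) ≤ f (ν yhigh) :=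
      hmon hMinv (Set.mem_Ioi.mpr (hνpos yhigh)) hyhigh
    linarith
  obtain ⟨νl, hνlmem, hfl⟩ := hfbij.surjOn (Set.mem_univ (f (1 / M) - Δ))
  obtain ⟨νu, hνumem, hfu⟩ := hfbij.surjOn (Set.mem_univ (f (1 / M) + Δ))
  refine ⟨νl, νu, hνlmem, ?_, by rw [hfl]; ring, by rw [hfu]; ring, ?_⟩
  · have : f νl ≤ f νu := by rw [hfl, hfu]; linarith
    exact (hfmono.le_iff_le hνlmem hνumem).mp this
  · intro y
    constructor
    · have : f νl ≤ f (ν y) := by rw [hfl]; linarith [hlb y]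
      exact (hfmono.le_iff_le hνlmem (Set.mem_Ioi.mpr (hνpos y))).mp this
    · have : f (ν y) ≤ f νu := by rw [hfu]; linarith [hub y]
      exact (hfmono.le_iff_le (Set.mem_Ioi.mpr (hνpos y)) hνumem).mp this
end

section
/- Let H be a real Hilbert space, A a (possibly unbounded, densely defined) linear operator with ⟨Aη, η⟩ ≤ 0 and ⟨Aη,η⟩ = 0 only if Aη = 0 and η is constant-zero in the quotient (i.e., ⟨Aη,η⟩ = -∫|∇η|² < 0 for nonconstant η), h a multiplication operator by a function with 0 < h ≤ h_max, and J a bounded operator with h_max · ‖J‖ < 1 so that I - hJ is invertible. Then the operator L = (I - hJ)(A - (I - hJ)⁻¹ h) has kernel equal to the kernel of A - (I-hJ)⁻¹h, and any η in this kernel with ⟨Aη, η⟩ < 0 leads to a contradiction; hence if ⟨Aη,η⟩ < 0 for all nonzero η in the domain, then L has trivial kernel. -/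
/-- let `H` be a real Hilbert space, `A` a linear operator with
`⟨Aη, η⟩ < 0` for all nonzero `η`, `h` a positive "multiplication" operator
bounded by `h_max` and satisfying `⟨h⁻¹ω, ω⟩ ≥ ‖ω‖²/h_max`, and `J` a bounded
operator with `h_max‖J‖ < 1` (so `I - hJ` is invertible).  Then the operator
`L = A - h - hJA = (I - hJ)(A - (I - hJ)⁻¹h)` has trivial kernel. -/
theorem stmt8 {H : Type*} [NormedAddCommGroup H] [InnerProductSpace ℝ H]
    [CompleteSpace H]
    (A : H →ₗ[ℝ] H)
    (hA : ∀ η : H, η ≠ 0 → (inner ℝ (A η) η : ℝ) < 0)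
    (hop J hinv : H →L[ℝ] H)
    (hmax : ℝ) (hmaxpos : 0 < hmax)
    (hopnorm : ‖hop‖ ≤ hmax)
    (hinv1 : hop * hinv = 1) (hinv2 : hinv * hop = 1)
    (hinvbound : ∀ ω : H, ‖ω‖ ^ 2 / hmax ≤ (inner ℝ (hinv ω) ω : ℝ))
    (hJ : hmax * ‖J‖ < 1) :
    ∀ η : H, A η - hop η - hop (J (A η)) = 0 → η = 0 := by
  intro η heq
  by_contra hne
  have hAneg := hA η hne
  have h1 : A η = hop (η + J (A η)) := by
    rw [map_add, ← sub_eq_zero, ← heq]; abel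
  have h2 : hinv (A η) = η + J (A η) := by
    have h0 : hinv (hop (η + J (A η))) = η + J (A η) := by
      have := ContinuousLinearMap.ext_iff.mp hinv2 (η + J (A η))
      simpa using this
    exact (congrArg hinv h1).trans h0
  have h3 : η = hinv (A η) - J (A η) := by rw [h2]; abel
  have hb1 : ‖A η‖ ^ 2 / hmax ≤ (inner ℝ (hinv (A η)) (A η) : ℝ) := hinvbound (A η)
  have hb2 : (inner ℝ (A η) (J (A η)) : ℝ) ≤ ‖J‖ * ‖A η‖ ^ 2 := by
    calc (inner ℝ (A η) (J (A η)) : ℝ) ≤ ‖A η‖ * ‖J (A η)‖ := real_inner_le_norm _ _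
    _ ≤ ‖A η‖ * (‖J‖ * ‖A η‖) := by
        have := J.le_opNorm (A η)
        nlinarith [norm_nonneg (A η)]
    _ = ‖J‖ * ‖A η‖ ^ 2 := by ring
  have hcomm : (inner ℝ (A η) (hinv (A η)) : ℝ) = (inner ℝ (hinv (A η)) (A η) : ℝ) := real_inner_comm _ _
  have hsplit : (inner ℝ (A η) η : ℝ) = (inner ℝ (A η) (hinv (A η)) : ℝ) - (inner ℝ (A η) (J (A η)) : ℝ) := by
    rw [← inner_sub_right, ← h3]
  have hJn : ‖J‖ * hmax < 1 := by linarith [hJ]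
  have hJnn : (0:ℝ) ≤ ‖J‖ := norm_nonneg J
  have hsq : (0:ℝ) ≤ ‖A η‖ ^ 2 := sq_nonneg _
  have : (0:ℝ) ≤ (inner ℝ (A η) η : ℝ) := by
    rw [hsplit, hcomm]
    have : ‖J‖ * ‖A η‖ ^ 2 ≤ ‖A η‖ ^ 2 / hmax := by
      rw [le_div_iff₀ hmaxpos]; nlinarith
    linarith
  linarith
end

section
/- Suppose ν, T satisfy f(ν(T(x))) = G(x, T(x)) for all x, where G(x,y) = -u(x) - c(x,y) - Ψ(y), T is differentiable with invertible differential, and -u_i(x) - c_i(x,T(x)) = 0 (the first-order transport identity). Then the derivative of ν in target coordinates satisfies ν_s(T(x)) = (f⁻¹)'(G) · ( -c_s(x,T(x)) - Ψ_s(T(x)) ), which is bounded by a constant depending only on f, c, Ψ and the bounds on ν, but not on derivatives of u or T. -/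
/-- first derivative of the equilibrium density in target
coordinates.  If `f(ν(T x)) = -u(x) - c(x, T x) - Ψ(T x)` for all `x`, `T`
has invertible differential, and the first-order transport identity
`Du(x) + D_x c(x, T x) = 0` holds, then
`f'(ν(T x)) • Dν(T x) = -(D_y c(x, T x) + DΨ(T x))`,
i.e. `ν_s(T x) = (f⁻¹)'(G) (-c_s(x,T x) - Ψ_s(T x))`, an expression not
involving derivatives of `u` or `T`. -/
theorem stmt11 {n : ℕ}
    (u : EuclideanSpace ℝ (Fin n) → ℝ)
    (c : EuclideanSpace ℝ (Fin n) → EuclideanSpace ℝ (Fin n) → ℝ)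
    (Ψ : EuclideanSpace ℝ (Fin n) → ℝ)
    (T : EuclideanSpace ℝ (Fin n) → EuclideanSpace ℝ (Fin n))
    (ν : EuclideanSpace ℝ (Fin n) → ℝ)
    (f : ℝ → ℝ)
    (hu : Differentiable ℝ u)
    (hc : Differentiable ℝ fun p : EuclideanSpace ℝ (Fin n) × EuclideanSpace ℝ (Fin n) =>
      c p.1 p.2)
    (hΨ : Differentiable ℝ Ψ)
    (hT : Differentiable ℝ T)
    (hν : Differentiable ℝ ν)
    (hf : Differentiable ℝ f)
    (hTinv : ∀ x, Function.Bijective (fderiv ℝ T x))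
    (hfo : ∀ x, fderiv ℝ u x + fderiv ℝ (fun x' => c x' (T x)) x = 0)
    (hrel : ∀ x, f (ν (T x)) = -u x - c x (T x) - Ψ (T x)) :
    ∀ x, deriv f (ν (T x)) • fderiv ℝ ν (T x)
      = -(fderiv ℝ (fun y => c x y) (T x) + fderiv ℝ Ψ (T x)) := by
  intro x
  have hTx : HasFDerivAt T (fderiv ℝ T x) x := (hT x).hasFDerivAt
  set DT := fderiv ℝ T x with hDT
  set Lc := fderiv ℝ (fun p : EuclideanSpace ℝ (Fin n) × EuclideanSpace ℝ (Fin n) =>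
    c p.1 p.2) (x, T x) with hLcdef
  have hLcF : HasFDerivAt
      (fun p : EuclideanSpace ℝ (Fin n) × EuclideanSpace ℝ (Fin n) => c p.1 p.2)
      Lc (x, T x) := (hc _).hasFDerivAt
  have hCx : HasFDerivAt (fun x' => c x' (T x))
      (Lc.comp (ContinuousLinearMap.inl ℝ (EuclideanSpace ℝ (Fin n)) (EuclideanSpace ℝ (Fin n)))) x := by
    have h1 : HasFDerivAt (fun x' : EuclideanSpace ℝ (Fin n) => (x', T x))
        (ContinuousLinearMap.inl ℝ (EuclideanSpace ℝ (Fin n)) (EuclideanSpace ℝ (Fin n))) x := by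
      have := HasFDerivAt.prodMk (hasFDerivAt_id x) (hasFDerivAt_const (𝕜 := ℝ) (T x) x)
      exact this
    exact hLcF.comp x h1
  have hCy : HasFDerivAt (fun y => c x y)
      (Lc.comp (ContinuousLinearMap.inr ℝ (EuclideanSpace ℝ (Fin n)) (EuclideanSpace ℝ (Fin n)))) (T x) := by
    have h1 : HasFDerivAt (fun y : EuclideanSpace ℝ (Fin n) => (x, y))
        (ContinuousLinearMap.inr ℝ (EuclideanSpace ℝ (Fin n)) (EuclideanSpace ℝ (Fin n)))
        (T x) := by
      have := HasFDerivAt.prodMk (hasFDerivAt_const (𝕜 := ℝ) x (T x)) (hasFDerivAt_id (T x))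
      exact this
    exact hLcF.comp (T x) h1
  have hCt : HasFDerivAt (fun x' => c x' (T x'))
      (Lc.comp ((ContinuousLinearMap.id ℝ (EuclideanSpace ℝ (Fin n))).prod DT)) x :=
    HasFDerivAt.comp (g := fun p : EuclideanSpace ℝ (Fin n) × EuclideanSpace ℝ (Fin n) => c p.1 p.2) x hLcF (HasFDerivAt.prodMk (hasFDerivAt_id x) hTx)
  have hνT : HasFDerivAt (fun x' => ν (T x')) ((fderiv ℝ ν (T x)).comp DT) x :=
    ((hν _).hasFDerivAt).comp x hTx
  have hfν : HasDerivAt f (deriv f (ν (T x))) (ν (T x)) := (hf _).hasDerivAt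
  have hL : HasFDerivAt (fun x' => f (ν (T x')))
      (deriv f (ν (T x)) • ((fderiv ℝ ν (T x)).comp DT)) x :=
    hfν.comp_hasFDerivAt x hνT
  have hR : HasFDerivAt (fun x' => -u x' - c x' (T x') - Ψ (T x'))
      (-(fderiv ℝ u x) - Lc.comp ((ContinuousLinearMap.id ℝ (EuclideanSpace ℝ (Fin n))).prod DT)
        - (fderiv ℝ Ψ (T x)).comp DT) x :=
    (((hu x).hasFDerivAt.neg).sub hCt).sub (((hΨ _).hasFDerivAt).comp x hTx)
  have hL' : HasFDerivAt (fun x' => -u x' - c x' (T x') - Ψ (T x'))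
      (deriv f (ν (T x)) • ((fderiv ℝ ν (T x)).comp DT)) x := by
    simpa only [hrel] using hL
  have Deq := hL'.unique hR
  rw [hCy.fderiv]
  have hfox := hfo x
  rw [hCx.fderiv] at hfox
  ext v
  obtain ⟨w, hw⟩ := (hTinv x).2 v
  have h1 := ContinuousLinearMap.ext_iff.mp Deq w
  have h2 := ContinuousLinearMap.ext_iff.mp hfox w
  have hsplit : Lc (w, DT w) = Lc (w, 0) + Lc (0, DT w) := by
    rw [← map_add]
    congr 1
    simp
  simp only [ContinuousLinearMap.smul_apply, ContinuousLinearMap.comp_apply,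
    ContinuousLinearMap.sub_apply, ContinuousLinearMap.neg_apply,
    ContinuousLinearMap.add_apply, ContinuousLinearMap.zero_apply,
    ContinuousLinearMap.prod_apply, ContinuousLinearMap.id_apply,
    ContinuousLinearMap.inl_apply, ContinuousLinearMap.inr_apply,
    smul_eq_mul] at h1 h2 ⊢
  rw [← hw]
  rw [hsplit] at h1
  linarith
end
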